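/- Let σ > 0, r > 0, β ∈ ℝ, λ ∈ (0,1) and τ₁ ∈ ℝ. Set q_A = Φᶜ(τ₁/σ), q_B = Φᶜ((τ₁ + β)/(r·σ)) and q_M = λ·q_A + (1−λ)·q_B, and let E[D] = (q_A − q_B)/q_M denote the expected fairness metric. Then E[D] > 0 if and only if (r−1)·τ₁ − β < 0, and E[D] < 0 if and only if (r−1)·τ₁ − β > 0. -/

import Mathlib

set_option maxHeartbeats 1000000
open MeasureTheory ProbabilityTheory Real

/-- Standard normal density. -/
noncomputable def stdPdf (x : ℝ) : ℝ := (Real.sqrt (2 * Real.pi))⁻¹ * Real.exp (-(x ^ 2) / 2)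

/-- Standard normal CDF. -/
noncomputable def stdCdf (x : ℝ) : ℝ := ∫ u in Set.Iic x, stdPdf u

/-- Standard normal complementary CDF. -/
noncomputable def stdCcdf (x : ℝ) : ℝ := 1 - stdCdf x

/-- Standard normal hazard rate. -/
noncomputable def hazard (x : ℝ) : ℝ := stdPdf x / stdCcdf x

lemma stdPdf_eq : stdPdf = gaussianPDFReal 0 1 := by
  funext x
  simp [stdPdf, gaussianPDFReal]

lemma stdPdf_pos (x : ℝ) : 0 < stdPdf x := by
  rw [stdPdf_eq]; exact gaussianPDFReal_pos 0 1 x one_ne_zero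

lemma integrable_stdPdf : Integrable stdPdf := by
  rw [stdPdf_eq]; exact integrable_gaussianPDFReal 0 1

lemma integral_stdPdf : ∫ x, stdPdf x = 1 := by
  rw [stdPdf_eq]; exact integral_gaussianPDFReal_eq_one 0 one_ne_zero

lemma stdCdf_strictMono : StrictMono stdCdf := by
  intro x y hxy
  have hsub : stdCdf y - stdCdf x = ∫ u in x..y, stdPdf u := by
    rw [stdCdf, stdCdf]
    exact intervalIntegral.integral_Iic_sub_Iic integrable_stdPdf.integrableOn
      integrable_stdPdf.integrableOn
  have hpos : 0 < ∫ u in x..y, stdPdf u :=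
    intervalIntegral.intervalIntegral_pos_of_pos
      integrable_stdPdf.intervalIntegrable (fun u => stdPdf_pos u) hxy
  linarith

lemma stdCdf_lt_one (x : ℝ) : stdCdf x < 1 := by
  have h : stdCdf x + ∫ u in Set.Ioi x, stdPdf u = 1 := by
    rw [stdCdf, ← integral_stdPdf]
    rw [← setIntegral_union (Set.Iic_disjoint_Ioi le_rfl) measurableSet_Ioi
      integrable_stdPdf.integrableOn integrable_stdPdf.integrableOn,
      Set.Iic_union_Ioi, setIntegral_univ]
  have hpos : 0 < ∫ u in Set.Ioi x, stdPdf u := by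
    have hsub : stdCdf (x + 1) - stdCdf x ≤ ∫ u in Set.Ioi x, stdPdf u := by
      have : stdCdf (x + 1) - stdCdf x = ∫ u in Set.Ioc x (x + 1), stdPdf u := by
        rw [stdCdf, stdCdf,
          intervalIntegral.integral_Iic_sub_Iic integrable_stdPdf.integrableOn
            integrable_stdPdf.integrableOn,
          intervalIntegral.integral_of_le (by linarith)]
      rw [this]
      exact setIntegral_mono_set integrable_stdPdf.integrableOn
        (ae_of_all _ fun u => (stdPdf_pos u).le)
        (HasSubset.Subset.eventuallyLE Set.Ioc_subset_Ioi_self)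
    have := stdCdf_strictMono (show x < x + 1 by linarith)
    linarith
  linarith

lemma stdCcdf_pos (x : ℝ) : 0 < stdCcdf x := by
  have := stdCdf_lt_one x
  simp only [stdCcdf]; linarith

/-- Direction of expected unfairness under delegation. With group A's signal `N(0,σ²)` and
group B's signal `N(−β, r²σ²)`, set `q_A = Φᶜ(τ₁/σ)`, `q_B = Φᶜ((τ₁+β)/(rσ))` and
`q_M = λ·q_A + (1−λ)·q_B`. Then `E[D] = (q_A − q_B)/q_M` is positive iff `(r−1)·τ₁ − β < 0`
and negative iff `(r−1)·τ₁ − β > 0`. -/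
theorem expected_fairness_sign
    (σ r β lam τ₁ : ℝ) (hσ : 0 < σ) (hr : 0 < r) (hlam : lam ∈ Set.Ioo (0 : ℝ) 1) :
    (0 < (stdCcdf (τ₁ / σ) - stdCcdf ((τ₁ + β) / (r * σ)))
          / (lam * stdCcdf (τ₁ / σ) + (1 - lam) * stdCcdf ((τ₁ + β) / (r * σ)))
        ↔ (r - 1) * τ₁ - β < 0) ∧
    ((stdCcdf (τ₁ / σ) - stdCcdf ((τ₁ + β) / (r * σ)))
          / (lam * stdCcdf (τ₁ / σ) + (1 - lam) * stdCcdf ((τ₁ + β) / (r * σ))) < 0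
        ↔ 0 < (r - 1) * τ₁ - β) := by
  obtain ⟨hl0, hl1⟩ := hlam
  set a := τ₁ / σ
  set b := (τ₁ + β) / (r * σ)
  have hden : 0 < lam * stdCcdf a + (1 - lam) * stdCcdf b := by
    have h1 := stdCcdf_pos a
    have h2 := stdCcdf_pos b
    nlinarith
  have hab : a < b ↔ (r - 1) * τ₁ - β < 0 := by
    rw [div_lt_div_iff₀ hσ (by positivity)]
    constructor <;> intro h <;> nlinarith
  have hba : b < a ↔ 0 < (r - 1) * τ₁ - β := by
    rw [div_lt_div_iff₀ (by positivity) hσ]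
    constructor <;> intro h <;> nlinarith
  have hnum1 : 0 < stdCcdf a - stdCcdf b ↔ a < b := by
    simp only [stdCcdf]
    constructor <;> intro h
    · by_contra hc
      push_neg at hc
      have := stdCdf_strictMono.monotone hc
      linarith
    · have := stdCdf_strictMono h; linarith
  have hnum2 : stdCcdf a - stdCcdf b < 0 ↔ b < a := by
    simp only [stdCcdf]
    constructor <;> intro h
    · by_contra hc
      push_neg at hc
      have := stdCdf_strictMono.monotone hc
      linarith
    · have := stdCdf_strictMono h; linarith
  constructor
  · rw [div_pos_iff]
    constructor
    · rintro (⟨h, _⟩ | ⟨_, h⟩)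
      · exact hab.mp (hnum1.mp h)
      · linarith
    · intro h
      exact Or.inl ⟨hnum1.mpr (hab.mpr h), hden⟩
  · rw [div_neg_iff]
    constructor
    · rintro (⟨_, h⟩ | ⟨h, _⟩)
      · linarith
      · exact hba.mp (hnum2.mp h)
    · intro h
      exact Or.inr ⟨hnum2.mpr (hba.mpr h), hden⟩
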